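/- Let (g, h; h̄, ḡ) ∈ Sp_res(V,Ω) and Z in the restricted Siegel disc D_res(H). Then h̄Z + ḡ is an invertible operator on H₋. -/

import Mathlib

/- Setting: `H = H₊ ⊕ H₋` is a separable complex Hilbert space. We model the two summands
as complex Hilbert spaces `Hp`, `Hm` and operators on `H` by their four blocks, or work on a
single Hilbert space `H` with orthogonal projections `p₊, p₋`. The antilinear conjugation
exchanging `H₊` and `H₋` is modeled as a conjugate-linear isometric equivalence
`c : Hp ≃ₛₗᵢ[starRingEnd ℂ] Hm`. -/

noncomputable section
open ContinuousLinearMap Complex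
open scoped InnerProductSpace ComplexOrder

instance : RingHomCompTriple (starRingEnd ℂ) (starRingEnd ℂ) (RingHom.id ℂ) :=
  ⟨RingHom.ext fun z => Complex.conj_conj z⟩

/-- A bounded operator between complex Hilbert spaces is Hilbert–Schmidt if for every
Hilbert basis, the sum of the squared norms of the images of the basis vectors is finite. -/
def IsHS {E F : Type} [NormedAddCommGroup E] [InnerProductSpace ℂ E]
    [NormedAddCommGroup F] [InnerProductSpace ℂ F] (T : E →L[ℂ] F) : Prop :=
  ∀ b : HilbertBasis ℕ ℂ E, Summable fun i => ‖T (b i)‖ ^ 2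

/-- The conjugate `T̄` (defined by `T̄ u = conj (T ū)`) of an operator, with respect to
antilinear conjugations `cA`, `cB` on the domain and codomain. -/
def opBar {A A' B B' : Type} [NormedAddCommGroup A] [InnerProductSpace ℂ A]
    [NormedAddCommGroup A'] [InnerProductSpace ℂ A']
    [NormedAddCommGroup B] [InnerProductSpace ℂ B]
    [NormedAddCommGroup B'] [InnerProductSpace ℂ B']
    (cA : A ≃ₛₗᵢ[starRingEnd ℂ] A') (cB : B ≃ₛₗᵢ[starRingEnd ℂ] B')
    (T : A →L[ℂ] B) : A' →L[ℂ] B' :=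
  cB.toLinearIsometry.toContinuousLinearMap.comp
    (T.comp cA.symm.toLinearIsometry.toContinuousLinearMap)

/-- Fredholm operator: finite-dimensional kernel and cokernel. -/
def IsFredholm {E F : Type} [NormedAddCommGroup E] [NormedSpace ℂ E]
    [NormedAddCommGroup F] [NormedSpace ℂ F] (T : E →L[ℂ] F) : Prop :=
  FiniteDimensional ℂ (LinearMap.ker (T : E →ₗ[ℂ] F)) ∧ FiniteDimensional ℂ (F ⧸ LinearMap.range (T : E →ₗ[ℂ] F))

/-- Fredholm index `Ind T = dim ker T − codim range T`. -/
def fredholmIndex {E F : Type} [NormedAddCommGroup E] [NormedSpace ℂ E]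
    [NormedAddCommGroup F] [NormedSpace ℂ F] (T : E →L[ℂ] F) : ℤ :=
  (Module.finrank ℂ (LinearMap.ker (T : E →ₗ[ℂ] F)) : ℤ) - Module.finrank ℂ (F ⧸ LinearMap.range (T : E →ₗ[ℂ] F))

variable {Hp Hm : Type} [NormedAddCommGroup Hp] [InnerProductSpace ℂ Hp] [CompleteSpace Hp]
  [NormedAddCommGroup Hm] [InnerProductSpace ℂ Hm] [CompleteSpace Hm]

/-- `Zᵀ := (Z̄)*` for `Z : H₋ → H₊`. -/
def opTrans (c : Hp ≃ₛₗᵢ[starRingEnd ℂ] Hm) (Z : Hm →L[ℂ] Hp) : Hm →L[ℂ] Hp :=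
  adjoint (opBar c.symm c Z)

/-- `ḡ : H₋ → H₋` for `g : H₊ → H₊`. -/
def barP (c : Hp ≃ₛₗᵢ[starRingEnd ℂ] Hm) (g : Hp →L[ℂ] Hp) : Hm →L[ℂ] Hm :=
  opBar c c g

/-- `h̄ : H₊ → H₋` for `h : H₋ → H₊`. -/
def barM (c : Hp ≃ₛₗᵢ[starRingEnd ℂ] Hm) (h : Hm →L[ℂ] Hp) : Hp →L[ℂ] Hm :=
  opBar c.symm c h

/-- `gᵀ := (ḡ)* : H₋ → H₋` for `g : H₊ → H₊`. -/
def transP (c : Hp ≃ₛₗᵢ[starRingEnd ℂ] Hm) (g : Hp →L[ℂ] Hp) : Hm →L[ℂ] Hm :=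
  adjoint (barP c g)

/-- The conditions on the blocks `(g, h; h̄, ḡ)` characterizing elements of `Sp(V,Ω)`:
`g*g − hᵀh̄ = id`, `g*h = hᵀḡ`, `gg* − hh* = id`, `ghᵀ = hgᵀ`. -/
def SympBlocks (c : Hp ≃ₛₗᵢ[starRingEnd ℂ] Hm) (g : Hp →L[ℂ] Hp) (h : Hm →L[ℂ] Hp) : Prop :=
  (adjoint g) ∘L g - (opTrans c h) ∘L (barM c h) = 1 ∧
  (adjoint g) ∘L h = (opTrans c h) ∘L (barP c g) ∧
  g ∘L (adjoint g) - h ∘L (adjoint h) = 1 ∧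
  g ∘L (opTrans c h) = h ∘L (transP c g)

/-- Membership in the restricted Siegel disc:
`Z` Hilbert–Schmidt, `Zᵀ = Z`, and `id − Z*Z ≻ 0`. -/
def InDres (c : Hp ≃ₛₗᵢ[starRingEnd ℂ] Hm) (Z : Hm →L[ℂ] Hp) : Prop :=
  IsHS Z ∧ opTrans c Z = Z ∧
    ∀ u : Hm, u ≠ 0 → 0 < ⟪u, (1 - (adjoint Z) ∘L Z) u⟫_ℂ

/-- The action `ρ((g,h;h̄,ḡ), Z) = (gZ + h)(h̄Z + ḡ)⁻¹`. -/
def rho (c : Hp ≃ₛₗᵢ[starRingEnd ℂ] Hm) (g : Hp →L[ℂ] Hp) (h : Hm →L[ℂ] Hp)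
    (Z : Hm →L[ℂ] Hp) : Hm →L[ℂ] Hp :=
  (g ∘L Z + h) ∘L Ring.inverse ((barM c h) ∘L Z + (barP c g))

/-! ### Auxiliary lemmas -/

private lemma conj_inner_map (c : Hp ≃ₛₗᵢ[starRingEnd ℂ] Hm) (x y : Hp) :
    ⟪c x, c y⟫_ℂ = ⟪y, x⟫_ℂ := by
  have hP : ∀ u v : Hp, c (u + Complex.I • v) = c u - Complex.I • c v := by
    intro u v
    rw [map_add, map_smulₛₗ]
    simp [Complex.conj_I, neg_smul, ← sub_eq_add_neg]
  have hM : ∀ u v : Hp, c (u - Complex.I • v) = c u + Complex.I • c v := by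
    intro u v
    rw [map_sub, map_smulₛₗ]
    simp [Complex.conj_I, neg_smul, sub_neg_eq_add]
  have n1 : ‖c x + c y‖ = ‖x + y‖ := by rw [← map_add]; exact c.norm_map _
  have n2 : ‖c x - c y‖ = ‖x - y‖ := by rw [← map_sub]; exact c.norm_map _
  have n3 : ‖c x - Complex.I • c y‖ = ‖x + Complex.I • y‖ := by
    rw [← hP]; exact c.norm_map _
  have n4 : ‖c x + Complex.I • c y‖ = ‖x - Complex.I • y‖ := by
    rw [← hM]; exact c.norm_map _
  have m1 : ‖y - Complex.I • x‖ = ‖x + Complex.I • y‖ := by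
    have e : (-Complex.I) • (x + Complex.I • y) = y - Complex.I • x := by
      rw [smul_add, smul_smul, neg_mul, Complex.I_mul_I, neg_neg, one_smul, neg_smul,
        add_comm, ← sub_eq_add_neg]
    rw [← e, norm_smul]; simp
  have m2 : ‖y + Complex.I • x‖ = ‖x - Complex.I • y‖ := by
    have e : Complex.I • (x - Complex.I • y) = y + Complex.I • x := by
      rw [smul_sub, smul_smul, Complex.I_mul_I, neg_one_smul, sub_neg_eq_add, add_comm]
    rw [← e, norm_smul]; simp
  rw [inner_eq_sum_norm_sq_div_four, inner_eq_sum_norm_sq_div_four]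
  simp only [RCLike.I_to_complex]
  rw [n1, n2, n3, n4, m1, m2, norm_sub_rev y x, add_comm y x]

private lemma conj_inner_symm (c : Hp ≃ₛₗᵢ[starRingEnd ℂ] Hm) (u v : Hm) :
    ⟪c.symm u, c.symm v⟫_ℂ = ⟪v, u⟫_ℂ := by
  have := conj_inner_map c (c.symm v) (c.symm u)
  simpa using this.symm

private lemma barM_apply (c : Hp ≃ₛₗᵢ[starRingEnd ℂ] Hm) (h : Hm →L[ℂ] Hp) (x : Hp) :
    barM c h x = c (h (c x)) := by
  simp [barM, opBar]

private lemma barP_apply (c : Hp ≃ₛₗᵢ[starRingEnd ℂ] Hm) (g : Hp →L[ℂ] Hp) (x : Hm) :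
    barP c g x = c (g (c.symm x)) := by
  simp [barP, opBar]

private lemma opTrans_eq_adjoint (c : Hp ≃ₛₗᵢ[starRingEnd ℂ] Hm) (h : Hm →L[ℂ] Hp) :
    opTrans c h = adjoint (barM c h) := rfl

private lemma adjoint_barM_apply (c : Hp ≃ₛₗᵢ[starRingEnd ℂ] Hm) (h : Hm →L[ℂ] Hp)
    (y : Hm) : adjoint (barM c h) y = c.symm (adjoint h (c.symm y)) := by
  have key : opBar c c.symm (adjoint h) = adjoint (barM c h) := by
    rw [ContinuousLinearMap.eq_adjoint_iff]
    intro x y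
    have lhs : opBar c c.symm (adjoint h) x = c.symm (adjoint h (c.symm x)) := by
      simp [opBar]
    rw [lhs, barM_apply]
    calc ⟪c.symm (adjoint h (c.symm x)), y⟫_ℂ
        = ⟪c.symm (adjoint h (c.symm x)), c.symm (c y)⟫_ℂ := by
          rw [c.symm_apply_apply]
      _ = ⟪c y, adjoint h (c.symm x)⟫_ℂ := conj_inner_symm c _ _
      _ = ⟪h (c y), c.symm x⟫_ℂ := adjoint_inner_right h _ _
      _ = ⟪c.symm (c (h (c y))), c.symm x⟫_ℂ := by rw [c.symm_apply_apply]
      _ = ⟪x, c (h (c y))⟫_ℂ := conj_inner_symm c _ _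
  rw [← key]; simp [opBar]

private lemma opTrans_apply (c : Hp ≃ₛₗᵢ[starRingEnd ℂ] Hm) (h : Hm →L[ℂ] Hp)
    (y : Hm) : opTrans c h y = c.symm (adjoint h (c.symm y)) := by
  rw [opTrans_eq_adjoint, adjoint_barM_apply]

private lemma adjoint_barP (c : Hp ≃ₛₗᵢ[starRingEnd ℂ] Hm) (g : Hp →L[ℂ] Hp) :
    adjoint (barP c g) = barP c (adjoint g) := by
  refine ((ContinuousLinearMap.eq_adjoint_iff _ _).mpr ?_).symm
  intro x y
  rw [barP_apply, barP_apply]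
  calc ⟪c (adjoint g (c.symm x)), y⟫_ℂ
      = ⟪c (adjoint g (c.symm x)), c (c.symm y)⟫_ℂ := by rw [c.apply_symm_apply]
    _ = ⟪c.symm y, adjoint g (c.symm x)⟫_ℂ := conj_inner_map c _ _
    _ = ⟪g (c.symm y), c.symm x⟫_ℂ := adjoint_inner_right g _ _
    _ = ⟪c.symm (c (g (c.symm y))), c.symm x⟫_ℂ := by rw [c.symm_apply_apply]
    _ = ⟪x, c (g (c.symm y))⟫_ℂ := conj_inner_symm c _ _

set_option maxHeartbeats 2000000 in
/-- for `(g, h; h̄, ḡ) ∈ Sp_res(V,Ω)` and `Z` in the restricted Siegel disc,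
`h̄Z + ḡ` is invertible on `H₋`. -/
theorem statement11 (c : Hp ≃ₛₗᵢ[starRingEnd ℂ] Hm) (g : Hp →L[ℂ] Hp) (h : Hm →L[ℂ] Hp)
    (hs : SympBlocks c g h) (hHS : IsHS h)
    (Z : Hm →L[ℂ] Hp) (hZ : InDres c Z) :
    IsUnit (barM c h ∘L Z + barP c g) := by
  obtain ⟨hrel1, hrel2, hrel3, hrel4⟩ := hs
  rcases subsingleton_or_nontrivial Hm with hsub | hnt
  · have h1 : (barM c h ∘L Z + barP c g) = 1 := by
      ext x; exact Subsingleton.elim _ _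
    rw [h1]; exact isUnit_one
  set gb := barP c g with hgb
  set hb := barM c h with hhb
  -- key identity 1 : ḡ* ḡ = 1 + h* h
  have hI4 : adjoint gb ∘L gb = 1 + adjoint h ∘L h := by
    ext x
    have h1 := ContinuousLinearMap.ext_iff.mp hrel1 (c.symm x)
    simp only [ContinuousLinearMap.sub_apply, ContinuousLinearMap.comp_apply,
      ContinuousLinearMap.one_apply, sub_eq_iff_eq_add, hhb, opTrans_apply, barM_apply,
      LinearIsometryEquiv.symm_apply_apply, LinearIsometryEquiv.apply_symm_apply] at h1
    -- h1 : adjoint g (g (c.symm x)) = c.symm x + c.symm (adjoint h (h x))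
    simp only [ContinuousLinearMap.comp_apply, ContinuousLinearMap.add_apply,
      ContinuousLinearMap.one_apply, hgb, adjoint_barP, barP_apply,
      LinearIsometryEquiv.symm_apply_apply]
    rw [h1, map_add, c.apply_symm_apply, c.apply_symm_apply]
  -- key identity 2 : ḡ ḡ* = 1 + h̄ h̄*
  have hbar3 : gb ∘L adjoint gb = 1 + hb ∘L adjoint hb := by
    ext x
    have h3 := ContinuousLinearMap.ext_iff.mp hrel3 (c.symm x)
    simp only [ContinuousLinearMap.sub_apply, ContinuousLinearMap.comp_apply,
      ContinuousLinearMap.one_apply, sub_eq_iff_eq_add] at h3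
    -- h3 : g (adjoint g (c.symm x)) = c.symm x + h (adjoint h (c.symm x))
    simp only [ContinuousLinearMap.comp_apply, ContinuousLinearMap.add_apply,
      ContinuousLinearMap.one_apply, hgb, hhb, adjoint_barP, barP_apply, barM_apply,
      adjoint_barM_apply, LinearIsometryEquiv.symm_apply_apply,
      LinearIsometryEquiv.apply_symm_apply]
    rw [h3, map_add, c.apply_symm_apply]
  -- norm identities
  have normsq : ∀ u : Hm, ‖gb u‖ ^ 2 = ‖u‖ ^ 2 + ‖h u‖ ^ 2 := by
    intro u
    have e1 : adjoint gb (gb u) = u + adjoint h (h u) := by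
      have := ContinuousLinearMap.ext_iff.mp hI4 u
      simpa using this
    have key : ⟪gb u, gb u⟫_ℂ = ⟪u, u⟫_ℂ + ⟪h u, h u⟫_ℂ := by
      calc ⟪gb u, gb u⟫_ℂ = ⟪u, adjoint gb (gb u)⟫_ℂ := (adjoint_inner_right gb u (gb u)).symm
        _ = ⟪u, u⟫_ℂ + ⟪u, adjoint h (h u)⟫_ℂ := by rw [e1, inner_add_right]
        _ = ⟪u, u⟫_ℂ + ⟪h u, h u⟫_ℂ := by rw [adjoint_inner_right]
    calc ‖gb u‖ ^ 2 = RCLike.re ⟪gb u, gb u⟫_ℂ := (inner_self_eq_norm_sq (gb u)).symm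
      _ = RCLike.re (⟪u, u⟫_ℂ + ⟪h u, h u⟫_ℂ) := by rw [key]
      _ = ‖u‖ ^ 2 + ‖h u‖ ^ 2 := by
          rw [map_add, inner_self_eq_norm_sq, inner_self_eq_norm_sq]
  have normsq' : ∀ u : Hm, ‖adjoint gb u‖ ^ 2 = ‖u‖ ^ 2 + ‖adjoint hb u‖ ^ 2 := by
    intro u
    have e1 : gb (adjoint gb u) = u + hb (adjoint hb u) := by
      have := ContinuousLinearMap.ext_iff.mp hbar3 u
      simpa using this
    have key : ⟪adjoint gb u, adjoint gb u⟫_ℂ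
        = ⟪u, u⟫_ℂ + ⟪adjoint hb u, adjoint hb u⟫_ℂ := by
      calc ⟪adjoint gb u, adjoint gb u⟫_ℂ
          = ⟪u, gb (adjoint gb u)⟫_ℂ := adjoint_inner_left gb (adjoint gb u) u
        _ = ⟪u, u⟫_ℂ + ⟪u, hb (adjoint hb u)⟫_ℂ := by rw [e1, inner_add_right]
        _ = ⟪u, u⟫_ℂ + ⟪adjoint hb u, adjoint hb u⟫_ℂ := by
            rw [adjoint_inner_left hb (adjoint hb u) u]
    calc ‖adjoint gb u‖ ^ 2
        = RCLike.re ⟪adjoint gb u, adjoint gb u⟫_ℂ := (inner_self_eq_norm_sq _).symm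
      _ = RCLike.re (⟪u, u⟫_ℂ + ⟪adjoint hb u, adjoint hb u⟫_ℂ) := by rw [key]
      _ = ‖u‖ ^ 2 + ‖adjoint hb u‖ ^ 2 := by
          rw [map_add, inner_self_eq_norm_sq, inner_self_eq_norm_sq]
  have lower : ∀ u : Hm, ‖u‖ ≤ ‖gb u‖ := by
    intro u
    nlinarith [normsq u, norm_nonneg u, norm_nonneg (gb u), sq_nonneg (‖h u‖)]
  have lower' : ∀ u : Hm, ‖u‖ ≤ ‖adjoint gb u‖ := by
    intro u
    nlinarith [normsq' u, norm_nonneg u, norm_nonneg (adjoint gb u), sq_nonneg (‖adjoint hb u‖)]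
  have anti : AntilipschitzWith 1 gb :=
    ContinuousLinearMap.antilipschitz_of_bound gb (by simpa using lower)
  have hker : gb.ker = ⊥ := LinearMap.ker_eq_bot.mpr anti.injective
  have horth : (gb.range)ᗮ = ⊥ := by
    rw [Submodule.eq_bot_iff]
    intro v hv
    rw [Submodule.mem_orthogonal] at hv
    have h0 : ⟪gb (adjoint gb v), v⟫_ℂ = 0 := hv _ (LinearMap.mem_range_self _ _)
    have h1 : ⟪adjoint gb v, adjoint gb v⟫_ℂ = 0 := by
      rw [adjoint_inner_right]; exact h0
    have h2 : adjoint gb v = 0 := inner_self_eq_zero.mp h1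
    have h3 := lower' v
    rw [h2, norm_zero] at h3
    exact norm_le_zero_iff.mp h3
  have hrange : gb.range = ⊤ := by
    have hcl := ContinuousLinearMap.closed_range_of_antilipschitz anti
    rw [← hcl]
    exact Submodule.topologicalClosure_eq_top_iff.mpr horth
  set e := ContinuousLinearEquiv.ofBijective gb hker hrange with he
  set S : Hp →L[ℂ] Hm := (e.symm : Hm →L[ℂ] Hm) ∘L hb with hS
  set N : ℝ := ‖adjoint gb‖ with hN
  have hN1 : 1 ≤ N := by
    obtain ⟨x, hx⟩ := exists_ne (0 : Hm)
    have h1 := lower' x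
    have h2 : ‖adjoint gb x‖ ≤ N * ‖x‖ := (adjoint gb).le_opNorm x
    have hx' : 0 < ‖x‖ := norm_pos_iff.mpr hx
    nlinarith
  have hNpos : 0 < N := lt_of_lt_of_le one_pos hN1
  have hsub : (0:ℝ) ≤ 1 - 1 / N ^ 2 := by
    have : 1 / N ^ 2 ≤ 1 := by
      rw [div_le_one (by positivity)]
      nlinarith
    linarith
  set q : ℝ := Real.sqrt (1 - 1 / N ^ 2) with hq
  have hq0 : 0 ≤ q := Real.sqrt_nonneg _
  have hqsq : q ^ 2 = 1 - 1 / N ^ 2 := Real.sq_sqrt hsub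
  have hq1 : q < 1 := by
    have hlt : 1 - 1 / N ^ 2 < 1 := by
      have : 0 < 1 / N ^ 2 := by positivity
      linarith
    have := Real.sqrt_lt_sqrt hsub hlt
    simpa only [Real.sqrt_one] using this
  have hSadj : adjoint S = adjoint hb ∘L adjoint (e.symm : Hm →L[ℂ] Hm) := by
    rw [hS, ContinuousLinearMap.adjoint_comp]
  have hgbe : ∀ v : Hm, adjoint gb (adjoint (e.symm : Hm →L[ℂ] Hm) v) = v := by
    intro v
    have hcomp : (e.symm : Hm →L[ℂ] Hm) ∘L gb = 1 := by
      ext w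
      simp [he, ContinuousLinearEquiv.ofBijective_symm_apply_apply]
    have h2 := congrArg ContinuousLinearMap.adjoint hcomp
    rw [ContinuousLinearMap.adjoint_comp] at h2
    have h3 : adjoint (1 : Hm →L[ℂ] Hm) = 1 := by
      have := ContinuousLinearMap.adjoint_id (𝕜 := ℂ) (E := Hm)
      simpa [ContinuousLinearMap.one_def] using this
    rw [h3] at h2
    exact ContinuousLinearMap.ext_iff.mp h2 v
  have hSbound : ∀ u : Hm, ‖adjoint S u‖ ≤ q * ‖u‖ := by
    intro u
    set v := adjoint (e.symm : Hm →L[ℂ] Hm) u with hv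
    have huv : adjoint gb v = u := hgbe u
    have h1 : ‖adjoint hb v‖ ^ 2 = ‖u‖ ^ 2 - ‖v‖ ^ 2 := by
      have := normsq' v
      rw [huv] at this
      linarith
    have h2 : ‖u‖ ≤ N * ‖v‖ := by
      rw [← huv]; exact (adjoint gb).le_opNorm v
    have h3 : ‖adjoint S u‖ = ‖adjoint hb v‖ := by
      rw [hSadj]; rfl
    rw [h3]
    have h5 : ‖u‖ ^ 2 ≤ N ^ 2 * ‖v‖ ^ 2 := by
      nlinarith [norm_nonneg u, norm_nonneg v]
    have h6 : ‖u‖ ^ 2 / N ^ 2 ≤ ‖v‖ ^ 2 := by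
      rw [div_le_iff₀ (by positivity)]
      nlinarith
    have h4 : ‖adjoint hb v‖ ^ 2 ≤ (q * ‖u‖) ^ 2 := by
      rw [mul_pow, hqsq]
      have expand : (1 - 1 / N ^ 2) * ‖u‖ ^ 2 = ‖u‖ ^ 2 - ‖u‖ ^ 2 / N ^ 2 := by
        ring
      rw [expand, h1]
      have : ‖u‖ ^ 2 / N ^ 2 ≤ ‖v‖ ^ 2 := h6
      have hdiv : ‖u‖ ^ 2 / N ^ 2 = ‖u‖ ^ 2 * (1 / N ^ 2) := by ring
      linarith
    nlinarith [norm_nonneg (adjoint hb v), mul_nonneg hq0 (norm_nonneg u)]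
  have hSnorm : ‖S‖ ≤ q := by
    have hadj : ‖adjoint S‖ ≤ q := ContinuousLinearMap.opNorm_le_bound _ hq0 hSbound
    calc ‖S‖ = ‖adjoint S‖ :=
          ((ContinuousLinearMap.adjoint : (Hp →L[ℂ] Hm) ≃ₗᵢ⋆[ℂ] _).norm_map S).symm
      _ ≤ q := hadj
  have hZ1 : ‖Z‖ ≤ 1 := by
    refine ContinuousLinearMap.opNorm_le_bound _ zero_le_one fun u => ?_
    rw [one_mul]
    rcases eq_or_ne u 0 with rfl | hu
    · simp
    · have hpos := hZ.2.2 u hu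
      have hcx : ⟪u, (1 - adjoint Z ∘L Z) u⟫_ℂ = ⟪u, u⟫_ℂ - ⟪Z u, Z u⟫_ℂ := by
        simp only [ContinuousLinearMap.sub_apply, ContinuousLinearMap.one_apply,
          ContinuousLinearMap.comp_apply, inner_sub_right, adjoint_inner_right]
      rw [hcx] at hpos
      have hre : (0:ℝ) < (⟪u, u⟫_ℂ - ⟪Z u, Z u⟫_ℂ).re := by
        simpa using (Complex.lt_def.mp hpos).1
      have hval : (⟪u, u⟫_ℂ - ⟪Z u, Z u⟫_ℂ).re = ‖u‖ ^ 2 - ‖Z u‖ ^ 2 := by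
        rw [Complex.sub_re,
          show (⟪u, u⟫_ℂ).re = ‖u‖ ^ 2 from inner_self_eq_norm_sq (𝕜 := ℂ) u,
          show (⟪Z u, Z u⟫_ℂ).re = ‖Z u‖ ^ 2 from inner_self_eq_norm_sq (𝕜 := ℂ) (Z u)]
      rw [hval] at hre
      nlinarith [norm_nonneg u, norm_nonneg (Z u)]
  set K : Hm →L[ℂ] Hm := S ∘L Z with hK
  have hKnorm : ‖K‖ < 1 := by
    calc ‖K‖ ≤ ‖S‖ * ‖Z‖ := ContinuousLinearMap.opNorm_comp_le _ _
      _ ≤ q * 1 := mul_le_mul hSnorm hZ1 (norm_nonneg Z) hq0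
      _ = q := mul_one q
      _ < 1 := hq1
  have hUnit1 : IsUnit (1 + K) := by
    have hn : ‖-K‖ < 1 := by rwa [norm_neg]
    have := isUnit_one_sub_of_norm_lt_one (x := -K) hn
    rwa [sub_neg_eq_add] at this
  have hUnitgb : IsUnit gb := by
    rw [ContinuousLinearMap.isUnit_iff_bijective]
    exact ⟨anti.injective, LinearMap.range_eq_top.mp hrange⟩
  have hfact : hb ∘L Z + gb = gb * (1 + K) := by
    rw [ContinuousLinearMap.mul_def]
    ext x
    simp only [ContinuousLinearMap.comp_apply, ContinuousLinearMap.add_apply,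
      ContinuousLinearMap.one_apply, hK, hS, ContinuousLinearEquiv.coe_coe]
    rw [map_add]
    have hc : gb (e.symm (hb (Z x))) = hb (Z x) := by
      simpa [he] using ContinuousLinearEquiv.ofBijective_apply_symm_apply gb hker hrange (hb (Z x))
    rw [hc, add_comm]
  rw [hfact]
  exact hUnitgb.mul hUnit1
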